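/- Let a, b, c, d, γ > 0 be real numbers with c/a + d/b < γ. Then the double integral ∫₀^∞ ∫₀^∞ (1 + x^a + y^b)^(−γ) x^(c−1) y^(d−1) dx dy is finite. -/

import Mathlib

open Real MeasureTheory Set

lemma aux_meas (p s γ : ℝ) :
    Measurable (fun x : ℝ => (1 + x ^ p) ^ (-γ) * x ^ (s - 1)) := by
  fun_prop

lemma aux_integrable (p s γ : ℝ) (hp : 0 < p) (hs : 0 < s) (h : s / p < γ) :
    IntegrableOn (fun x : ℝ => (1 + x ^ p) ^ (-γ) * x ^ (s - 1)) (Ioi 0) := by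
  have hγ : 0 < γ := lt_of_le_of_lt (by positivity) h
  have hsp : s < p * γ := by
    rw [div_lt_iff₀ hp] at h; linarith [h]
  have hmeas : AEStronglyMeasurable (fun x : ℝ => (1 + x ^ p) ^ (-γ) * x ^ (s - 1)) (volume : Measure ℝ) := (aux_meas p s γ).aestronglyMeasurable
  have h1 : IntegrableOn (fun x : ℝ => (1 + x ^ p) ^ (-γ) * x ^ (s - 1)) (Ioc 0 1) := by
    have hint : IntegrableOn (fun x : ℝ => x ^ (s - 1)) (Ioc (0:ℝ) 1) := by
      rw [← intervalIntegrable_iff_integrableOn_Ioc_of_le zero_le_one]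
      exact intervalIntegral.intervalIntegrable_rpow' (by linarith)
    refine hint.mono' (hmeas.restrict) ?_
    filter_upwards [ae_restrict_mem measurableSet_Ioc] with x hx
    have hx0 : 0 < x := hx.1
    rw [Real.norm_eq_abs, abs_mul, abs_of_nonneg (by positivity), abs_of_nonneg (by positivity)]
    have : (1 + x ^ p) ^ (-γ) ≤ 1 :=
      rpow_le_one_of_one_le_of_nonpos (by nlinarith [rpow_nonneg hx0.le p]) (by linarith)
    nlinarith [rpow_nonneg hx0.le (s-1), rpow_nonneg hx0.le p,
      rpow_nonneg (show (0:ℝ) ≤ 1 + x^p by nlinarith [rpow_nonneg hx0.le p]) (-γ)]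
  have h2 : IntegrableOn (fun x : ℝ => (1 + x ^ p) ^ (-γ) * x ^ (s - 1)) (Ioi 1) := by
    have hint : IntegrableOn (fun x : ℝ => x ^ (s - 1 - p * γ)) (Ioi (1:ℝ)) :=
      integrableOn_Ioi_rpow_of_lt (by linarith) zero_lt_one
    refine hint.mono' (hmeas.restrict) ?_
    filter_upwards [ae_restrict_mem measurableSet_Ioi] with x hx
    have hx0 : (0:ℝ) < x := lt_trans zero_lt_one hx
    have hxp : 0 < x ^ p := rpow_pos_of_pos hx0 p
    rw [Real.norm_eq_abs, abs_mul, abs_of_nonneg (by positivity), abs_of_nonneg (by positivity)]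
    have hle : (1 + x ^ p) ^ (-γ) ≤ (x ^ p) ^ (-γ) :=
      rpow_le_rpow_of_nonpos hxp (by linarith) (by linarith)
    calc (1 + x ^ p) ^ (-γ) * x ^ (s - 1) ≤ (x ^ p) ^ (-γ) * x ^ (s - 1) := by
          nlinarith [rpow_nonneg hx0.le (s-1)]
      _ = x ^ (s - 1 - p * γ) := by
          rw [← rpow_mul hx0.le, ← rpow_add hx0]
          ring_nf
  have := h1.union h2
  rwa [Ioc_union_Ioi_eq_Ioi zero_le_one] at this


/-- if `a,b,c,d,γ > 0` and `c/a + d/b < γ`, then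
`∫₀^∞∫₀^∞ (1+x^a+y^b)^(-γ) x^(c-1) y^(d-1) dx dy < ∞`. -/
theorem integrable_rpow_double (a b c d γ : ℝ) (ha : 0 < a) (hb : 0 < b)
    (hc : 0 < c) (hd : 0 < d) (hγ : 0 < γ) (h : c / a + d / b < γ) :
    IntegrableOn
      (fun z : ℝ × ℝ =>
        (1 + z.1 ^ a + z.2 ^ b) ^ (-γ) * z.1 ^ (c - 1) * z.2 ^ (d - 1))
      (Ioi (0:ℝ) ×ˢ Ioi (0:ℝ)) := by
  set ε := (γ - c / a - d / b) / 2 with hε_def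
  have hε : 0 < ε := by simp only [hε_def]; linarith
  set γ₁ := c / a + ε with hγ₁_def
  set γ₂ := d / b + ε with hγ₂_def
  have hγ₁ : 0 < γ₁ := by positivity
  have hγ₂ : 0 < γ₂ := by positivity
  have hsum : γ₁ + γ₂ = γ := by simp only [hγ₁_def, hγ₂_def, hε_def]; ring
  have hf : IntegrableOn (fun x : ℝ => (1 + x ^ a) ^ (-γ₁) * x ^ (c - 1)) (Ioi 0) :=
    aux_integrable a c γ₁ ha hc (by simp only [hγ₁_def]; linarith)
  have hg : IntegrableOn (fun y : ℝ => (1 + y ^ b) ^ (-γ₂) * y ^ (d - 1)) (Ioi 0) :=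
    aux_integrable b d γ₂ hb hd (by simp only [hγ₂_def]; linarith)
  have hprod : Integrable
      (fun z : ℝ × ℝ => ((1 + z.1 ^ a) ^ (-γ₁) * z.1 ^ (c - 1)) *
        ((1 + z.2 ^ b) ^ (-γ₂) * z.2 ^ (d - 1)))
      ((volume.restrict (Ioi (0:ℝ))).prod (volume.restrict (Ioi (0:ℝ)))) :=
    Integrable.mul_prod hf hg
  rw [Measure.prod_restrict, ← Measure.volume_eq_prod] at hprod
  have hFmeas : AEStronglyMeasurable
      (fun z : ℝ × ℝ => (1 + z.1 ^ a + z.2 ^ b) ^ (-γ) * z.1 ^ (c - 1) * z.2 ^ (d - 1))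
      (volume.restrict (Ioi (0:ℝ) ×ˢ Ioi (0:ℝ))) := by
    apply Measurable.aestronglyMeasurable
    fun_prop
  refine hprod.mono' hFmeas ?_
  filter_upwards [ae_restrict_mem (measurableSet_Ioi.prod measurableSet_Ioi)] with z hz
  obtain ⟨hx, hy⟩ := hz
  simp only [mem_Ioi] at hx hy
  have hxa : 0 < z.1 ^ a := rpow_pos_of_pos hx a
  have hyb : 0 < z.2 ^ b := rpow_pos_of_pos hy b
  have h1 : (0:ℝ) < 1 + z.1 ^ a := by linarith
  have h2 : (0:ℝ) < 1 + z.2 ^ b := by linarith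
  have h3 : (0:ℝ) < 1 + z.1 ^ a + z.2 ^ b := by linarith
  rw [Real.norm_eq_abs, abs_of_nonneg (by positivity)]
  have key : (1 + z.1 ^ a + z.2 ^ b) ^ (-γ) ≤ (1 + z.1 ^ a) ^ (-γ₁) * (1 + z.2 ^ b) ^ (-γ₂) := by
    have : (1 + z.1 ^ a + z.2 ^ b) ^ (-γ)
        = (1 + z.1 ^ a + z.2 ^ b) ^ (-γ₁) * (1 + z.1 ^ a + z.2 ^ b) ^ (-γ₂) := by
      rw [← rpow_add h3]; rw [show -γ₁ + -γ₂ = -γ by linarith]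
    rw [this]
    exact mul_le_mul (rpow_le_rpow_of_nonpos h1 (by linarith) (by linarith))
      (rpow_le_rpow_of_nonpos h2 (by linarith) (by linarith))
      (rpow_nonneg h3.le _) (rpow_nonneg h1.le _)
  have hc1 : 0 ≤ z.1 ^ (c - 1) := rpow_nonneg hx.le _
  have hd1 : 0 ≤ z.2 ^ (d - 1) := rpow_nonneg hy.le _
  calc (1 + z.1 ^ a + z.2 ^ b) ^ (-γ) * z.1 ^ (c - 1) * z.2 ^ (d - 1)
      ≤ ((1 + z.1 ^ a) ^ (-γ₁) * (1 + z.2 ^ b) ^ (-γ₂)) * z.1 ^ (c - 1) * z.2 ^ (d - 1) := by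
        have := mul_nonneg hc1 hd1
        nlinarith [mul_nonneg hc1 hd1]
    _ = ((1 + z.1 ^ a) ^ (-γ₁) * z.1 ^ (c - 1)) * ((1 + z.2 ^ b) ^ (-γ₂) * z.2 ^ (d - 1)) := by
        ring
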